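/- Let L be a finite distributive lattice with rank function r, μ: L → ℝ≥0 a log-supermodular function (i.e., μ(x)μ(y) ≤ μ(x∧y)μ(x∨y) for all x,y), and g, h: L → ℝ≥0 both monotonely increasing. Define the polynomial E(k;q) = Σ_{x∈L} k(x) μ(x) q^{r(x)}. Then every coefficient of the polynomial E(1;q)·E(gh;q) − E(g;q)·E(h;q) is nonnegative. -/

import Mathlib

open Polynomial

section QFKGproof
open Finset
variable {V : Type*} [DecidableEq V]

private lemma base_lemma {u v m q : ℝ} (hv0 : 0 ≤ v) (hm0 : 0 ≤ m) (hq0 : 0 ≤ q)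
    (hu : u ≤ m) (hv : v ≤ m) (huv : u * v ≤ m * q) : u + v ≤ m + q := by
  rcases eq_or_lt_of_le hm0 with hm | hm
  · have hv' : v ≤ 0 := hm ▸ hv
    have hu' : u ≤ 0 := hm ▸ hu
    nlinarith
  · have h1 : (m - u) * (m - v) ≥ 0 := mul_nonneg (by linarith) (by linarith)
    have h2 : m * (u + v) ≤ m * (m + q) := by nlinarith
    exact le_of_mul_le_mul_left h2 hm

private theorem AD (s : Finset V) (f1 f2 f3 f4 : Finset V → ℝ)
    (h1 : ∀ A, 0 ≤ f1 A) (h2 : ∀ A, 0 ≤ f2 A) (h3 : ∀ A, 0 ≤ f3 A) (h4 : ∀ A, 0 ≤ f4 A)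
    (hc : ∀ A B : Finset V, A ⊆ s → B ⊆ s → f1 A * f2 B ≤ f3 (A ∪ B) * f4 (A ∩ B)) :
    (∑ A ∈ s.powerset, f1 A) * (∑ A ∈ s.powerset, f2 A) ≤
      (∑ A ∈ s.powerset, f3 A) * (∑ A ∈ s.powerset, f4 A) := by
  induction s using Finset.induction_on generalizing f1 f2 f3 f4 with
  | empty =>
      simp only [powerset_empty, sum_singleton]
      simpa using hc ∅ ∅ (by simp) (by simp)
  | @insert p t hp ih =>
      rw [Finset.sum_powerset_insert hp, Finset.sum_powerset_insert hp,
        Finset.sum_powerset_insert hp, Finset.sum_powerset_insert hp]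
      have key := ih (fun A => f1 A + f1 (insert p A)) (fun A => f2 A + f2 (insert p A))
        (fun A => f3 A + f3 (insert p A)) (fun A => f4 A + f4 (insert p A))
        (fun A => add_nonneg (h1 A) (h1 _)) (fun A => add_nonneg (h2 A) (h2 _))
        (fun A => add_nonneg (h3 A) (h3 _)) (fun A => add_nonneg (h4 A) (h4 _))
        ?_
      · calc (∑ A ∈ t.powerset, f1 A + ∑ A ∈ t.powerset, f1 (insert p A)) *
              (∑ A ∈ t.powerset, f2 A + ∑ A ∈ t.powerset, f2 (insert p A))
            = (∑ A ∈ t.powerset, (f1 A + f1 (insert p A))) *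
              (∑ A ∈ t.powerset, (f2 A + f2 (insert p A))) := by rw [sum_add_distrib, sum_add_distrib]
          _ ≤ (∑ A ∈ t.powerset, (f3 A + f3 (insert p A))) *
              (∑ A ∈ t.powerset, (f4 A + f4 (insert p A))) := key
          _ = (∑ A ∈ t.powerset, f3 A + ∑ A ∈ t.powerset, f3 (insert p A)) *
              (∑ A ∈ t.powerset, f4 A + ∑ A ∈ t.powerset, f4 (insert p A)) := by
                rw [sum_add_distrib, sum_add_distrib]
      · intro A B hA hB
        show (f1 A + f1 (insert p A)) * (f2 B + f2 (insert p B)) ≤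
          (f3 (A ∪ B) + f3 (insert p (A ∪ B))) * (f4 (A ∩ B) + f4 (insert p (A ∩ B)))
        have hpA : p ∉ A := fun h => hp (hA h)
        have hpB : p ∉ B := fun h => hp (hB h)
        have hAs : A ⊆ insert p t := hA.trans (subset_insert _ _)
        have hBs : B ⊆ insert p t := hB.trans (subset_insert _ _)
        have hiu : insert p A ∪ insert p B = insert p (A ∪ B) := by
          ext a; simp only [mem_insert, mem_union]; tauto
        have hii : insert p A ∩ insert p B = insert p (A ∩ B) := by
          ext a; simp only [mem_insert, mem_inter]; tauto
        have hu1 : insert p A ∪ B = insert p (A ∪ B) := by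
          ext a; simp only [mem_insert, mem_union]; tauto
        have hu2 : A ∪ insert p B = insert p (A ∪ B) := by
          ext a; simp only [mem_insert, mem_union]; tauto
        have hi1 : insert p A ∩ B = A ∩ B := by
          ext a; simp only [mem_inter, mem_insert]
          constructor
          · rintro ⟨rfl | h, hb⟩
            · exact absurd hb hpB
            · exact ⟨h, hb⟩
          · tauto
        have hi2 : A ∩ insert p B = A ∩ B := by
          ext a; simp only [mem_inter, mem_insert]
          constructor
          · rintro ⟨ha, rfl | h⟩
            · exact absurd ha hpA
            · exact ⟨ha, h⟩
          · tauto
        have e1 : f1 A * f2 B ≤ f3 (A ∪ B) * f4 (A ∩ B) := hc A B hAs hBs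
        have e4 : f1 (insert p A) * f2 (insert p B) ≤
            f3 (insert p (A ∪ B)) * f4 (insert p (A ∩ B)) := by
          have := hc (insert p A) (insert p B) (insert_subset_insert _ hA)
            (insert_subset_insert _ hB)
          rwa [hiu, hii] at this
        have e2 : f1 (insert p A) * f2 B ≤ f3 (insert p (A ∪ B)) * f4 (A ∩ B) := by
          have := hc (insert p A) B (insert_subset_insert _ hA) hBs
          rwa [hu1, hi1] at this
        have e3 : f1 A * f2 (insert p B) ≤ f3 (insert p (A ∪ B)) * f4 (A ∩ B) := by
          have := hc A (insert p B) hAs (insert_subset_insert _ hB)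
          rwa [hu2, hi2] at this
        have emid : f1 (insert p A) * f2 B + f1 A * f2 (insert p B) ≤
            f3 (insert p (A ∪ B)) * f4 (A ∩ B) + f3 (A ∪ B) * f4 (insert p (A ∩ B)) := by
          apply base_lemma (mul_nonneg (h1 _) (h2 _)) (mul_nonneg (h3 _) (h4 _))
            (mul_nonneg (h3 _) (h4 _)) e2 e3
          calc f1 (insert p A) * f2 B * (f1 A * f2 (insert p B))
              = (f1 A * f2 B) * (f1 (insert p A) * f2 (insert p B)) := by ring
            _ ≤ (f3 (A ∪ B) * f4 (A ∩ B)) * (f3 (insert p (A ∪ B)) * f4 (insert p (A ∩ B))) :=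
                mul_le_mul e1 e4 (mul_nonneg (h1 _) (h2 _))
                  (mul_nonneg (h3 _) (h4 _))
            _ = f3 (insert p (A ∪ B)) * f4 (A ∩ B) * (f3 (A ∪ B) * f4 (insert p (A ∩ B))) := by
                ring
        calc (f1 A + f1 (insert p A)) * (f2 B + f2 (insert p B))
            = f1 A * f2 B + (f1 (insert p A) * f2 B + f1 A * f2 (insert p B)) +
              f1 (insert p A) * f2 (insert p B) := by ring
          _ ≤ f3 (A ∪ B) * f4 (A ∩ B) +
              (f3 (insert p (A ∪ B)) * f4 (A ∩ B) + f3 (A ∪ B) * f4 (insert p (A ∩ B))) +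
              f3 (insert p (A ∪ B)) * f4 (insert p (A ∩ B)) := by linarith
          _ = (f3 (A ∪ B) + f3 (insert p (A ∪ B))) * (f4 (A ∩ B) + f4 (insert p (A ∩ B))) := by
              ring



private theorem Tlem (S : Finset V) (μ g h : Finset V → ℝ)
    (hμ0 : ∀ A, 0 ≤ μ A) (hg0 : ∀ A, 0 ≤ g A) (hh0 : ∀ A, 0 ≤ h A)
    (hμls : ∀ A B : Finset V, μ A * μ B ≤ μ (A ∩ B) * μ (A ∪ B))
    (hg : ∀ A B : Finset V, A ⊆ B → g A ≤ g B) (hh : ∀ A B : Finset V, A ⊆ B → h A ≤ h B) :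
    ∑ A ∈ S.powerset, (g A * μ A) * (h (S \ A) * μ (S \ A)) ≤
      ∑ A ∈ S.powerset, μ A * (g (S \ A) * h (S \ A) * μ (S \ A)) := by
  set ν : Finset V → ℝ := fun A => μ A * μ (S \ A) with hν
  have hν0 : ∀ A, 0 ≤ ν A := fun A => mul_nonneg (hμ0 _) (hμ0 _)
  set k : Finset V → ℝ := fun A => h (S \ A) with hk
  have hk0 : ∀ A, 0 ≤ k A := fun A => hh0 _
  have hkanti : ∀ A B : Finset V, A ⊆ B → k B ≤ k A := fun A B hAB =>
    hh _ _ (sdiff_subset_sdiff le_rfl hAB)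
  -- ν is log-supermodular (for arbitrary A B)
  have hνls : ∀ A B : Finset V, ν A * ν B ≤ ν (A ∩ B) * ν (A ∪ B) := by
    intro A B
    have i1 : (S \ A) ∩ (S \ B) = S \ (A ∪ B) := by
      ext a; simp only [mem_inter, mem_sdiff, mem_union]; tauto
    have i2 : (S \ A) ∪ (S \ B) = S \ (A ∩ B) := by
      ext a; simp only [mem_union, mem_sdiff, mem_inter]; tauto
    have e1 : μ A * μ B ≤ μ (A ∩ B) * μ (A ∪ B) := hμls A B
    have e2 : μ (S \ A) * μ (S \ B) ≤ μ (S \ (A ∪ B)) * μ (S \ (A ∩ B)) := by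
      have := hμls (S \ A) (S \ B)
      rwa [i1, i2] at this
    calc ν A * ν B = (μ A * μ B) * (μ (S \ A) * μ (S \ B)) := by simp only [hν]; ring
      _ ≤ (μ (A ∩ B) * μ (A ∪ B)) * (μ (S \ (A ∪ B)) * μ (S \ (A ∩ B))) :=
          mul_le_mul e1 e2 (mul_nonneg (hμ0 _) (hμ0 _)) (mul_nonneg (hμ0 _) (hμ0 _))
      _ = ν (A ∩ B) * ν (A ∪ B) := by simp only [hν]; ring
  -- reindexing A ↦ S \ A on the powerset
  have reidx : ∀ F : Finset V → ℝ, ∑ A ∈ S.powerset, F (S \ A) = ∑ A ∈ S.powerset, F A := by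
    intro F
    apply Finset.sum_nbij' (fun A => S \ A) (fun A => S \ A)
    · intro A hA; exact mem_powerset.2 (sdiff_subset)
    · intro A hA; exact mem_powerset.2 (sdiff_subset)
    · intro A hA; exact Finset.sdiff_sdiff_eq_self (mem_powerset.1 hA)
    · intro A hA; exact Finset.sdiff_sdiff_eq_self (mem_powerset.1 hA)
    · intro A hA; rfl
  have hsym : ∀ A ∈ S.powerset, ν (S \ A) = ν A := by
    intro A hA
    simp only [hν]
    rw [Finset.sdiff_sdiff_eq_self (mem_powerset.1 hA), mul_comm]
  have cond1 : ∀ A B : Finset V, A ⊆ S → B ⊆ S →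
      (g A * k A * ν A) * ν B ≤ (g (A ∪ B) * ν (A ∪ B)) * (k (A ∩ B) * ν (A ∩ B)) := by
    intro A B hA hB
    have h1 : g A ≤ g (A ∪ B) := hg _ _ subset_union_left
    have h2 : k A ≤ k (A ∩ B) := hkanti _ _ inter_subset_left
    have h3 : ν A * ν B ≤ ν (A ∩ B) * ν (A ∪ B) := hνls A B
    calc g A * k A * ν A * ν B = (g A * k A) * (ν A * ν B) := by ring
      _ ≤ (g (A ∪ B) * k (A ∩ B)) * (ν (A ∩ B) * ν (A ∪ B)) :=
          mul_le_mul (mul_le_mul h1 h2 (hk0 _) (le_trans (hg0 _) h1))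
            h3 (mul_nonneg (hν0 _) (hν0 _))
            (mul_nonneg (le_trans (hg0 _) h1) (le_trans (hk0 _) h2))
      _ = g (A ∪ B) * ν (A ∪ B) * (k (A ∩ B) * ν (A ∩ B)) := by ring
  have cond2 : ∀ A B : Finset V, A ⊆ S → B ⊆ S →
      (g A * ν A) * (h B * ν B) ≤ (g (A ∪ B) * h (A ∪ B) * ν (A ∪ B)) * ν (A ∩ B) := by
    intro A B hA hB
    have h1 : g A ≤ g (A ∪ B) := hg _ _ subset_union_left
    have h2 : h B ≤ h (A ∪ B) := hh _ _ subset_union_right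
    have h3 : ν A * ν B ≤ ν (A ∩ B) * ν (A ∪ B) := hνls A B
    calc g A * ν A * (h B * ν B) = (g A * h B) * (ν A * ν B) := by ring
      _ ≤ (g (A ∪ B) * h (A ∪ B)) * (ν (A ∩ B) * ν (A ∪ B)) :=
          mul_le_mul (mul_le_mul h1 h2 (hh0 _) (le_trans (hg0 _) h1))
            h3 (mul_nonneg (hν0 _) (hν0 _))
            (mul_nonneg (le_trans (hg0 _) h1) (le_trans (hh0 _) h2))
      _ = g (A ∪ B) * h (A ∪ B) * ν (A ∪ B) * ν (A ∩ B) := by ring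
  have ad1 := AD S (fun A => g A * k A * ν A) ν (fun A => g A * ν A) (fun A => k A * ν A)
    (fun A => mul_nonneg (mul_nonneg (hg0 _) (hk0 _)) (hν0 _)) hν0
    (fun A => mul_nonneg (hg0 _) (hν0 _)) (fun A => mul_nonneg (hk0 _) (hν0 _))
    (fun A B hA hB => cond1 A B hA hB)
  have ad2 := AD S (fun A => g A * ν A) (fun A => h A * ν A)
    (fun A => g A * h A * ν A) ν
    (fun A => mul_nonneg (hg0 _) (hν0 _)) (fun A => mul_nonneg (hh0 _) (hν0 _))
    (fun A => mul_nonneg (mul_nonneg (hg0 _) (hh0 _)) (hν0 _)) hν0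
    (fun A B hA hB => cond2 A B hA hB)
  have lhs_eq : ∑ A ∈ S.powerset, (g A * μ A) * (h (S \ A) * μ (S \ A)) =
      ∑ A ∈ S.powerset, g A * k A * ν A := by
    apply Finset.sum_congr rfl; intro A _; simp only [hν, hk]; ring
  have rhs_eq : ∑ A ∈ S.powerset, μ A * (g (S \ A) * h (S \ A) * μ (S \ A)) =
      ∑ A ∈ S.powerset, g A * h A * ν A := by
    rw [← reidx (fun A => g A * h A * ν A)]
    apply Finset.sum_congr rfl; intro A hA
    simp only [hν]
    rw [Finset.sdiff_sdiff_eq_self (mem_powerset.1 hA)]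
    ring
  have kν_eq : ∑ A ∈ S.powerset, k A * ν A = ∑ A ∈ S.powerset, h A * ν A := by
    rw [← reidx (fun A => h A * ν A)]
    apply Finset.sum_congr rfl; intro A hA
    simp only [hν, hk]
    rw [Finset.sdiff_sdiff_eq_self (mem_powerset.1 hA)]
    ring
  rw [lhs_eq, rhs_eq]
  by_cases hz : ∑ A ∈ S.powerset, ν A = 0
  · have hzero : ∀ A ∈ S.powerset, ν A = 0 := by
      intro A hA
      exact (Finset.sum_eq_zero_iff_of_nonneg (fun A _ => hν0 A)).1 hz A hA
    have : ∑ A ∈ S.powerset, g A * k A * ν A = 0 := by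
      apply Finset.sum_eq_zero; intro A hA; rw [hzero A hA, mul_zero]
    rw [this]
    exact Finset.sum_nonneg fun A _ => mul_nonneg (mul_nonneg (hg0 _) (hh0 _)) (hν0 _)
  · have hpos : 0 < ∑ A ∈ S.powerset, ν A :=
      lt_of_le_of_ne (Finset.sum_nonneg fun A _ => hν0 A) (Ne.symm hz)
    have chain : (∑ A ∈ S.powerset, ν A) * (∑ A ∈ S.powerset, g A * k A * ν A) ≤
        (∑ A ∈ S.powerset, ν A) * (∑ A ∈ S.powerset, g A * h A * ν A) := by
      calc (∑ A ∈ S.powerset, ν A) * (∑ A ∈ S.powerset, g A * k A * ν A)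
          = (∑ A ∈ S.powerset, g A * k A * ν A) * (∑ A ∈ S.powerset, ν A) := by ring
        _ ≤ (∑ A ∈ S.powerset, g A * ν A) * (∑ A ∈ S.powerset, k A * ν A) := ad1
        _ = (∑ A ∈ S.powerset, g A * ν A) * (∑ A ∈ S.powerset, h A * ν A) := by rw [kν_eq]
        _ ≤ (∑ A ∈ S.powerset, g A * h A * ν A) * (∑ A ∈ S.powerset, ν A) := ad2
        _ = (∑ A ∈ S.powerset, ν A) * (∑ A ∈ S.powerset, g A * h A * ν A) := by ring
    exact le_of_mul_le_mul_left chain hpos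

open scoped Classical in
noncomputable def Qsum (w : V → ℤ) (S s : Finset V) (d : ℤ) (F G : Finset V → ℝ) : ℝ :=
  ∑ A ∈ (S ∪ s).powerset, ∑ B ∈ (S ∪ s).powerset,
    (if S ⊆ A ∪ B ∧ A ∩ B ∩ S = ∅ ∧ (∑ x ∈ A ∩ s, w x) + (∑ x ∈ B ∩ s, w x) = d
     then F A * G B else 0)

set_option maxHeartbeats 1000000 in
open scoped Classical in
private theorem Qlem (s : Finset V) : ∀ (S : Finset V), Disjoint S s →
    ∀ (w : V → ℤ) (μ g h : Finset V → ℝ),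
    (∀ A, 0 ≤ μ A) → (∀ A, 0 ≤ g A) → (∀ A, 0 ≤ h A) →
    (∀ A B : Finset V, μ A * μ B ≤ μ (A ∩ B) * μ (A ∪ B)) →
    (∀ A B : Finset V, A ⊆ B → g A ≤ g B) → (∀ A B : Finset V, A ⊆ B → h A ≤ h B) →
    ∀ d : ℤ,
    Qsum w S s d (fun A => g A * μ A) (fun B => h B * μ B) ≤
      Qsum w S s d μ (fun B => g B * h B * μ B) := by
  induction s using Finset.induction_on with
  | empty =>
      intro S _ w μ g h hμ0 hg0 hh0 hls hgm hhm d
      by_cases hd : d = 0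
      · subst hd
        have key : ∀ F G : Finset V → ℝ, Qsum w S ∅ 0 F G =
            ∑ A ∈ S.powerset, F A * G (S \ A) := by
          intro F G
          unfold Qsum
          rw [union_empty]
          apply Finset.sum_congr rfl
          intro A hA
          have hAS : A ⊆ S := mem_powerset.1 hA
          refine Eq.trans (Finset.sum_eq_single_of_mem (S \ A)
            (mem_powerset.2 sdiff_subset) ?_) ?_
          · -- other B give zero
            intro B hB hBne
            rw [if_neg]
            rintro ⟨c1, c2, -⟩
            apply hBne
            ext x
            simp only [mem_sdiff]
            constructor
            · intro hxB
              have hxS : x ∈ S := mem_powerset.1 hB hxB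
              refine ⟨hxS, fun hxA => ?_⟩
              have : x ∈ A ∩ B ∩ S := by simp [hxA, hxB, hxS]
              rw [c2] at this
              exact absurd this (notMem_empty x)
            · rintro ⟨hxS, hxA⟩
              rcases mem_union.1 (c1 hxS) with h' | h'
              · exact absurd h' hxA
              · exact h'
          · rw [if_pos]
            refine ⟨?_, ?_, ?_⟩
            · intro x hxS
              by_cases hxA : x ∈ A
              · exact mem_union.2 (Or.inl hxA)
              · exact mem_union.2 (Or.inr (mem_sdiff.2 ⟨hxS, hxA⟩))
            · ext x
              simp only [mem_inter, mem_sdiff, notMem_empty, iff_false]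
              rintro ⟨⟨hxA, -, hnA⟩, -⟩
              exact hnA hxA
            · simp
        rw [key, key]
        exact Tlem S μ g h hμ0 hg0 hh0 hls hgm hhm
      · have z1 : ∀ F G : Finset V → ℝ, Qsum w S ∅ d F G = 0 := by
          intro F G
          unfold Qsum
          apply Finset.sum_eq_zero; intro A _
          apply Finset.sum_eq_zero; intro B _
          rw [if_neg]
          rintro ⟨-, -, c3⟩
          simp only [inter_empty, sum_empty] at c3
          exact hd (by omega)
        rw [z1, z1]
  | @insert p t hp ih =>
      intro S hdisj w μ g h hμ0 hg0 hh0 hls hgm hhm d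
      have hpS : p ∉ S := disjoint_right.1 hdisj (mem_insert_self p t)
      have hdSt : Disjoint S t := disjoint_of_subset_right (subset_insert p t) hdisj
      have hpSt : p ∉ S ∪ t := by simp [hpS, hp]
      have hdisj2 : Disjoint (insert p S) t := by
        rw [disjoint_insert_left]; exact ⟨hp, hdSt⟩
      -- set union identity
      have hU : S ∪ insert p t = insert p (S ∪ t) := union_insert p S t
      have hU2 : insert p S ∪ t = insert p (S ∪ t) := insert_union p S t
      -- generic expansion of a double powerset sum
      have expand : ∀ K : Finset V → Finset V → ℝ,
          (∑ A ∈ (insert p (S ∪ t)).powerset, ∑ B ∈ (insert p (S ∪ t)).powerset, K A B) =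
          (∑ A ∈ (S ∪ t).powerset, ∑ B ∈ (S ∪ t).powerset, K A B) +
          (∑ A ∈ (S ∪ t).powerset, ∑ B ∈ (S ∪ t).powerset, K A (insert p B)) +
          ((∑ A ∈ (S ∪ t).powerset, ∑ B ∈ (S ∪ t).powerset, K (insert p A) B) +
           (∑ A ∈ (S ∪ t).powerset, ∑ B ∈ (S ∪ t).powerset, K (insert p A) (insert p B))) := by
        intro K
        rw [Finset.sum_powerset_insert hpSt]
        congr 1
        · rw [← Finset.sum_add_distrib]
          apply Finset.sum_congr rfl
          intro A _
          rw [Finset.sum_powerset_insert hpSt]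
        · rw [← Finset.sum_add_distrib]
          apply Finset.sum_congr rfl
          intro A _
          rw [Finset.sum_powerset_insert hpSt]
      -- insert/inter identities
      have hins_ii : ∀ X Y : Finset V, insert p X ∩ insert p Y = insert p (X ∩ Y) := by
        intro X Y; ext x; simp only [mem_insert, mem_inter]; tauto
      have hins_uu : ∀ X Y : Finset V, insert p X ∪ insert p Y = insert p (X ∪ Y) := by
        intro X Y; ext x; simp only [mem_insert, mem_union]; tauto
      have hins_u1 : ∀ X Y : Finset V, insert p X ∪ Y = insert p (X ∪ Y) := by
        intro X Y; ext x; simp only [mem_insert, mem_union]; tauto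
      have hins_u2 : ∀ X Y : Finset V, X ∪ insert p Y = insert p (X ∪ Y) := by
        intro X Y; ext x; simp only [mem_insert, mem_union]; tauto
      have hins_i1 : ∀ {X Y : Finset V}, p ∉ Y → insert p X ∩ Y = X ∩ Y := by
        intro X Y hpY; ext x; simp only [mem_insert, mem_inter]
        constructor
        · rintro ⟨rfl | hx, hy⟩
          · exact absurd hy hpY
          · exact ⟨hx, hy⟩
        · tauto
      have hins_i2 : ∀ {X Y : Finset V}, p ∉ X → X ∩ insert p Y = X ∩ Y := by
        intro X Y hpX; ext x; simp only [mem_insert, mem_inter]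
        constructor
        · rintro ⟨hx, rfl | hy⟩
          · exact absurd hx hpX
          · exact ⟨hx, hy⟩
        · tauto
      have hsub_ins : ∀ {X : Finset V}, S ⊆ insert p X ↔ S ⊆ X := by
        intro X
        constructor
        · intro hs x hx
          rcases mem_insert.1 (hs hx) with rfl | h
          · exact absurd hx hpS
          · exact h
        · intro hs; exact hs.trans (subset_insert _ _)
      have hWins : ∀ {X : Finset V}, p ∉ X → ∑ x ∈ insert p X, w x = w p + ∑ x ∈ X, w x :=
        fun h => Finset.sum_insert h
      -- the master expansion of Qsum
      have master : ∀ F G : Finset V → ℝ,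
          Qsum w S (insert p t) d F G =
            Qsum w S t d F G + Qsum w (insert p S) t (d - w p) F G +
              Qsum w S t (d - 2 * w p) (fun A => F (insert p A)) (fun B => G (insert p B)) := by
        intro F G
        unfold Qsum
        rw [hU, hU2]
        rw [expand]
        rw [expand]
        -- equalities between the pieces
        have e1 : (∑ A ∈ (S ∪ t).powerset, ∑ B ∈ (S ∪ t).powerset,
              (if S ⊆ A ∪ B ∧ A ∩ B ∩ S = ∅ ∧
                  (∑ x ∈ A ∩ insert p t, w x) + (∑ x ∈ B ∩ insert p t, w x) = d
               then F A * G B else 0)) =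
            (∑ A ∈ (S ∪ t).powerset, ∑ B ∈ (S ∪ t).powerset,
              (if S ⊆ A ∪ B ∧ A ∩ B ∩ S = ∅ ∧
                  (∑ x ∈ A ∩ t, w x) + (∑ x ∈ B ∩ t, w x) = d
               then F A * G B else 0)) := by
          apply Finset.sum_congr rfl; intro A hA
          apply Finset.sum_congr rfl; intro B hB
          have hpA : p ∉ A := fun hx => hpSt (mem_powerset.1 hA hx)
          have hpB : p ∉ B := fun hx => hpSt (mem_powerset.1 hB hx)
          rw [hins_i2 hpA, hins_i2 hpB]
        have e4 : (∑ A ∈ (S ∪ t).powerset, ∑ B ∈ (S ∪ t).powerset,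
              (if S ⊆ insert p A ∪ insert p B ∧ insert p A ∩ insert p B ∩ S = ∅ ∧
                  (∑ x ∈ insert p A ∩ insert p t, w x) +
                    (∑ x ∈ insert p B ∩ insert p t, w x) = d
               then F (insert p A) * G (insert p B) else 0)) =
            (∑ A ∈ (S ∪ t).powerset, ∑ B ∈ (S ∪ t).powerset,
              (if S ⊆ A ∪ B ∧ A ∩ B ∩ S = ∅ ∧
                  (∑ x ∈ A ∩ t, w x) + (∑ x ∈ B ∩ t, w x) = d - 2 * w p
               then (fun A => F (insert p A)) A * (fun B => G (insert p B)) B else 0)) := by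
          apply Finset.sum_congr rfl; intro A hA
          apply Finset.sum_congr rfl; intro B hB
          have hpA : p ∉ A := fun hx => hpSt (mem_powerset.1 hA hx)
          have hpB : p ∉ B := fun hx => hpSt (mem_powerset.1 hB hx)
          have hpAt : p ∉ A ∩ t := fun hx => hp (mem_inter.1 hx).2
          have hpBt : p ∉ B ∩ t := fun hx => hp (mem_inter.1 hx).2
          have hw1 : insert p A ∩ insert p t = insert p (A ∩ t) := hins_ii A t
          have hw2 : insert p B ∩ insert p t = insert p (B ∩ t) := hins_ii B t
          apply if_congr _ rfl rfl
          rw [hins_uu, hins_ii, hsub_ins, hins_i1 hpS, hw1, hw2,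
            Finset.sum_insert hpAt, Finset.sum_insert hpBt]
          constructor
          · rintro ⟨c1, c2, c3⟩; exact ⟨c1, c2, by omega⟩
          · rintro ⟨c1, c2, c3⟩; exact ⟨c1, c2, by omega⟩
        have m1 : (∑ A ∈ (S ∪ t).powerset, ∑ B ∈ (S ∪ t).powerset,
              (if insert p S ⊆ A ∪ B ∧ A ∩ B ∩ insert p S = ∅ ∧
                  (∑ x ∈ A ∩ t, w x) + (∑ x ∈ B ∩ t, w x) = d - w p
               then F A * G B else 0)) = 0 := by
          apply Finset.sum_eq_zero; intro A hA
          apply Finset.sum_eq_zero; intro B hB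
          have hpA : p ∉ A := fun hx => hpSt (mem_powerset.1 hA hx)
          have hpB : p ∉ B := fun hx => hpSt (mem_powerset.1 hB hx)
          rw [if_neg]
          rintro ⟨c1, -, -⟩
          rcases mem_union.1 (c1 (mem_insert_self p S)) with hx | hx
          · exact hpA hx
          · exact hpB hx
        have m4 : (∑ A ∈ (S ∪ t).powerset, ∑ B ∈ (S ∪ t).powerset,
              (if insert p S ⊆ insert p A ∪ insert p B ∧
                  insert p A ∩ insert p B ∩ insert p S = ∅ ∧
                  (∑ x ∈ insert p A ∩ t, w x) + (∑ x ∈ insert p B ∩ t, w x) = d - w p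
               then F (insert p A) * G (insert p B) else 0)) = 0 := by
          apply Finset.sum_eq_zero; intro A hA
          apply Finset.sum_eq_zero; intro B hB
          rw [if_neg]
          rintro ⟨-, c2, -⟩
          have : p ∈ insert p A ∩ insert p B ∩ insert p S := by
            simp [mem_inter, mem_insert_self]
          rw [c2] at this
          exact absurd this (notMem_empty p)
        have e2 : (∑ A ∈ (S ∪ t).powerset, ∑ B ∈ (S ∪ t).powerset,
              (if S ⊆ A ∪ insert p B ∧ A ∩ insert p B ∩ S = ∅ ∧
                  (∑ x ∈ A ∩ insert p t, w x) + (∑ x ∈ insert p B ∩ insert p t, w x) = d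
               then F A * G (insert p B) else 0)) =
            (∑ A ∈ (S ∪ t).powerset, ∑ B ∈ (S ∪ t).powerset,
              (if insert p S ⊆ A ∪ insert p B ∧ A ∩ insert p B ∩ insert p S = ∅ ∧
                  (∑ x ∈ A ∩ t, w x) + (∑ x ∈ insert p B ∩ t, w x) = d - w p
               then F A * G (insert p B) else 0)) := by
          apply Finset.sum_congr rfl; intro A hA
          apply Finset.sum_congr rfl; intro B hB
          have hpA : p ∉ A := fun hx => hpSt (mem_powerset.1 hA hx)
          have hpB : p ∉ B := fun hx => hpSt (mem_powerset.1 hB hx)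
          have hpBt : p ∉ B ∩ t := fun hx => hp (mem_inter.1 hx).2
          have hpAB : p ∉ A ∩ B := fun hx => hpA (mem_inter.1 hx).1
          apply if_congr _ rfl rfl
          refine and_congr ?_ (and_congr ?_ ?_)
          · constructor
            · intro hs
              exact Finset.insert_subset_iff.2
                ⟨mem_union_right _ (mem_insert_self p B), hs⟩
            · intro hs; exact (subset_insert p S).trans hs
          · rw [hins_i2 hpA, hins_i2 hpAB]
          · rw [hins_i2 hpA, hins_ii B t, Finset.sum_insert hpBt, hins_i1 hp]
            omega
        have e3 : (∑ A ∈ (S ∪ t).powerset, ∑ B ∈ (S ∪ t).powerset,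
              (if S ⊆ insert p A ∪ B ∧ insert p A ∩ B ∩ S = ∅ ∧
                  (∑ x ∈ insert p A ∩ insert p t, w x) + (∑ x ∈ B ∩ insert p t, w x) = d
               then F (insert p A) * G B else 0)) =
            (∑ A ∈ (S ∪ t).powerset, ∑ B ∈ (S ∪ t).powerset,
              (if insert p S ⊆ insert p A ∪ B ∧ insert p A ∩ B ∩ insert p S = ∅ ∧
                  (∑ x ∈ insert p A ∩ t, w x) + (∑ x ∈ B ∩ t, w x) = d - w p
               then F (insert p A) * G B else 0)) := by
          apply Finset.sum_congr rfl; intro A hA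
          apply Finset.sum_congr rfl; intro B hB
          have hpA : p ∉ A := fun hx => hpSt (mem_powerset.1 hA hx)
          have hpB : p ∉ B := fun hx => hpSt (mem_powerset.1 hB hx)
          have hpAt : p ∉ A ∩ t := fun hx => hp (mem_inter.1 hx).2
          have hpAB : p ∉ insert p A ∩ B := fun hx => hpB (mem_inter.1 hx).2
          apply if_congr _ rfl rfl
          refine and_congr ?_ (and_congr ?_ ?_)
          · constructor
            · intro hs
              exact Finset.insert_subset_iff.2
                ⟨mem_union_left _ (mem_insert_self p A), hs⟩
            · intro hs; exact (subset_insert p S).trans hs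
          · rw [hins_i2 hpAB]
          · rw [hins_ii A t, Finset.sum_insert hpAt, hins_i1 hp, hins_i2 hpB]
            omega
        rw [e1, e4, m1, m4, e2, e3]
        ring
      rw [master, master]
      have I1 := ih S hdSt w μ g h hμ0 hg0 hh0 hls hgm hhm d
      have I23 := ih (insert p S) hdisj2 w μ g h hμ0 hg0 hh0 hls hgm hhm (d - w p)
      have hls' : ∀ A B : Finset V, μ (insert p A) * μ (insert p B) ≤
          μ (insert p A ∩ insert p B) * μ (insert p A ∪ insert p B) := fun A B => hls _ _
      have I4 := ih S hdSt w (fun A => μ (insert p A)) (fun A => g (insert p A))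
        (fun A => h (insert p A))
        (fun A => hμ0 _) (fun A => hg0 _) (fun A => hh0 _)
        (fun A B => by
          have := hls (insert p A) (insert p B)
          rwa [hins_ii, hins_uu] at this)
        (fun A B hAB => hgm _ _ (insert_subset_insert _ hAB))
        (fun A B hAB => hhm _ _ (insert_subset_insert _ hAB))
        (d - 2 * w p)
      exact add_le_add (add_le_add I1 I23) I4


end QFKGproof

open Finset
set_option maxHeartbeats 1600000 in
/-- q-FKG inequality: for a finite distributive lattice with rank function `r`
(satisfying the modular law), a log-supermodular weight `μ` and increasing
nonnegative functions `g, h`, the polynomial `E(1;q)·E(gh;q) − E(g;q)·E(h;q)`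
has nonnegative coefficients. -/
theorem stmt_0 {L : Type*} [DistribLattice L] [Fintype L]
    (r : L → ℕ) (hr : ∀ x y : L, r x + r y = r (x ⊓ y) + r (x ⊔ y))
    (μ g h : L → ℝ)
    (hμ0 : ∀ x, 0 ≤ μ x) (hg0 : ∀ x, 0 ≤ g x) (hh0 : ∀ x, 0 ≤ h x)
    (hμ : ∀ x y : L, μ x * μ y ≤ μ (x ⊓ y) * μ (x ⊔ y))
    (hg : Monotone g) (hh : Monotone h) :
    ∀ d : ℕ,
      ((∑ x : L, C (g x * μ x) * X ^ r x) * (∑ x : L, C (h x * μ x) * X ^ r x)).coeff d ≤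
      ((∑ x : L, C (μ x) * X ^ r x) *
        (∑ x : L, C (g x * h x * μ x) * X ^ r x)).coeff d := by
  classical
  intro d
  have coeff_eq : ∀ F G : L → ℝ,
      ((∑ x : L, C (F x) * X ^ r x) * (∑ x : L, C (G x) * X ^ r x)).coeff d =
      ∑ x : L, ∑ y : L, (if r x + r y = d then F x * G y else 0) := by
    intro F G
    rw [Finset.sum_mul_sum, Polynomial.finset_sum_coeff]
    apply Finset.sum_congr rfl; intro x _
    rw [Polynomial.finset_sum_coeff]
    apply Finset.sum_congr rfl; intro y _
    have hterm : (C (F x) * X ^ r x) * (C (G y) * X ^ r y) =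
        C (F x * G y) * X ^ (r x + r y) := by
      rw [C_mul, pow_add]; ring
    rw [hterm, Polynomial.coeff_C_mul, Polynomial.coeff_X_pow]
    by_cases hxy : r x + r y = d
    · rw [if_pos hxy.symm, if_pos hxy, mul_one]
    · rw [if_neg hxy, if_neg (fun hc : d = r x + r y => hxy hc.symm), mul_zero]
  rw [coeff_eq, coeff_eq]
  rcases isEmpty_or_nonempty L with hemp | hne
  · rw [Finset.univ_eq_empty, Finset.sum_empty, Finset.sum_empty]
  obtain ⟨x0⟩ := hne
  -- bottom element
  have hbotex : ∃ b : L, ∀ z : L, b ≤ z :=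
    ⟨Finset.univ.inf' ⟨x0, mem_univ x0⟩ id, fun z => Finset.inf'_le id (mem_univ z)⟩
  obtain ⟨bt, hbt⟩ := hbotex
  letI : Bot L := ⟨bt⟩
  letI : OrderBot L := ⟨fun a => hbt a⟩
  have hbot' : ∀ z : L, (⊥ : L) ≤ z := hbt
  set P := {p : L // SupIrred p} with hP
  -- the Birkhoff map
  set e : L → Finset P := fun x => Finset.univ.filter (fun p => (p : L) ≤ x) with he
  have hmem_e : ∀ (q : P) (x : L), q ∈ e x ↔ (q : L) ≤ x := by
    intro q x; simp [he]
  set j : Finset P → L := fun A => A.sup (fun q => (q : L)) with hj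
  have prime : ∀ (q : P) (x y : L), (q : L) ≤ x ⊔ y → (q : L) ≤ x ∨ (q : L) ≤ y := by
    intro q x y hle
    have hsplit : ((q : L) ⊓ x) ⊔ ((q : L) ⊓ y) = (q : L) := by
      rw [← inf_sup_left]; exact inf_eq_left.2 hle
    rcases q.2.2 hsplit with h' | h'
    · left; rw [← h']; exact inf_le_right
    · right; rw [← h']; exact inf_le_right
  have emono : ∀ {u v : L}, u ≤ v → e u ⊆ e v := by
    intro u v huv q hq
    exact (hmem_e q v).2 (((hmem_e q u).1 hq).trans huv)
  have le_j_self : ∀ x : L, x ≤ j (e x) := by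
    intro x
    refine (wellFounded_lt (α := L)).induction (C := fun z => z ≤ j (e z)) x ?_
    intro z ihz
    by_cases hz : SupIrred z
    · have hmem : (⟨z, hz⟩ : P) ∈ e z := (hmem_e _ _).2 le_rfl
      simp only [hj]
      exact Finset.le_sup (f := fun q : P => (q : L)) hmem
    · rw [SupIrred] at hz; push_neg at hz
      by_cases hmin : IsMin z
      · exact (hmin (hbot' z)).trans (hbot' _)
      · obtain ⟨b, c, hbc, hbz, hcz⟩ := hz hmin
        have hbl : b < z := lt_of_le_of_ne (hbc ▸ le_sup_left) hbz
        have hcl : c < z := lt_of_le_of_ne (hbc ▸ le_sup_right) hcz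
        calc z = b ⊔ c := hbc.symm
          _ ≤ j (e z) := sup_le ((ihz b hbl).trans (Finset.sup_mono (emono hbl.le)))
              ((ihz c hcl).trans (Finset.sup_mono (emono hcl.le)))
  have hj_e : ∀ x : L, j (e x) = x := fun x =>
    le_antisymm (Finset.sup_le fun q hq => (hmem_e q x).1 hq) (le_j_self x)
  have einj : Function.Injective e := fun x y hxy => by
    rw [← hj_e x, ← hj_e y, hxy]
  have e_inf : ∀ x y : L, e (x ⊓ y) = e x ∩ e y := by
    intro x y; ext q
    simp only [hmem_e, mem_inter, le_inf_iff]
  have e_sup : ∀ x y : L, e (x ⊔ y) = e x ∪ e y := by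
    intro x y; ext q
    simp only [mem_union, hmem_e]
    constructor
    · intro hq; exact prime q x y hq
    · rintro (h1 | h1)
      · exact h1.trans le_sup_left
      · exact h1.trans le_sup_right
  have p_le_j : ∀ (q : P) (A : Finset P), (q : L) ≤ j A → ∃ a ∈ A, (q : L) ≤ (a : L) := by
    intro q A
    induction A using Finset.induction_on with
    | empty =>
        intro hle
        exfalso
        have hqbot : (q : L) ≤ ⊥ := by simpa [hj] using hle
        exact q.2.1 fun b _ => hqbot.trans (hbot' b)
    | @insert qa A' hqa ihA =>
        intro hle
        rw [hj] at hle
        simp only [Finset.sup_insert] at hle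
        rcases prime q _ _ hle with h1 | h1
        · exact ⟨qa, mem_insert_self _ _, h1⟩
        · obtain ⟨a, ha, hqe⟩ := ihA h1
          exact ⟨a, mem_insert_of_mem ha, hqe⟩
  have e_j_erase : ∀ (x : L) (p : P), p ∈ e x → (∀ q ∈ e x, ¬ (p : L) < (q : L)) →
      e (j ((e x).erase p)) = (e x).erase p := by
    intro x p hpx hmax
    ext q
    rw [hmem_e, mem_erase, hmem_e]
    constructor
    · intro hq
      obtain ⟨a, haE, hqa⟩ := p_le_j q _ hq
      have hanep := (mem_erase.1 haE).1
      have haex := (mem_erase.1 haE).2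
      refine ⟨?_, hqa.trans ((hmem_e a x).1 haex)⟩
      rintro rfl
      have hlt : (q : L) < (a : L) :=
        lt_of_le_of_ne hqa (fun hEq => hanep (Subtype.ext hEq.symm))
      exact hmax a haex hlt
    · rintro ⟨hqp, hqx⟩
      have hqmem : q ∈ (e x).erase p := mem_erase.2 ⟨hqp, (hmem_e q x).2 hqx⟩
      simp only [hj]
      exact Finset.le_sup (f := fun q : P => (q : L)) hqmem
  set wv : P → ℤ := fun p => (r (p : L) : ℤ) - (r (j ((e (p : L)).erase p)) : ℤ) with hwv
  -- valuation representation
  have rep : ∀ (n : ℕ) (x : L), (e x).card = n →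
      (r x : ℤ) = (r (⊥ : L) : ℤ) + ∑ p ∈ e x, wv p := by
    intro n
    induction n using Nat.strong_induction_on with
    | _ n ihn =>
      intro x hcard
      rcases Finset.eq_empty_or_nonempty (e x) with hE | hNE
      · have hxbot : x = ⊥ := by
          rw [← hj_e x, hE]; simp [hj]
        have hE' : e (⊥ : L) = ∅ := hxbot ▸ hE
        rw [hxbot, hE']; simp
      · obtain ⟨p, hpE, hpmax⟩ : ∃ p ∈ e x, ∀ q ∈ e x, ¬ p < q := by
          obtain ⟨p, hp⟩ := Finset.exists_maximal hNE
          exact ⟨p, hp.1, fun q hq hlt => hlt.not_ge (hp.2 hq hlt.le)⟩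
        have hmax' : ∀ q ∈ e x, ¬ (p : L) < (q : L) := by
          intro q hq hlt
          exact hpmax q hq (by exact_mod_cast hlt)
        have hEy : e (j ((e x).erase p)) = (e x).erase p := e_j_erase x p hpE hmax'
        set y := j ((e x).erase p) with hy
        have hcardE : ((e x).erase p).card < n := by
          rw [← hcard]; exact card_erase_lt_of_mem hpE
        have ihy := ihn _ hcardE y (by rw [hEy])
        have hpmaxP : ∀ q ∈ e (p : L), ¬ (p : L) < (q : L) := by
          intro q hq hlt
          exact hlt.not_ge ((hmem_e q _).1 hq)
        have hpmemP : p ∈ e (p : L) := (hmem_e _ _).2 le_rfl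
        have hEpm : e (j ((e (p : L)).erase p)) = (e (p : L)).erase p :=
          e_j_erase (p : L) p hpmemP hpmaxP
        have hsupe : y ⊔ (p : L) = x := by
          apply einj
          rw [e_sup, hEy]
          ext q
          simp only [mem_union, mem_erase, hmem_e]
          constructor
          · rintro (⟨-, hq⟩ | hq)
            · exact hq
            · exact hq.trans ((hmem_e p x).1 hpE)
          · intro hq
            by_cases hqp : q = p
            · right; rw [hqp]
            · left; exact ⟨hqp, hq⟩
        have hinfe : y ⊓ (p : L) = j ((e (p : L)).erase p) := by
          apply einj
          rw [e_inf, hEy, hEpm]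
          ext q
          simp only [mem_inter, mem_erase, hmem_e]
          constructor
          · rintro ⟨⟨hqp, -⟩, hq⟩
            exact ⟨hqp, hq⟩
          · rintro ⟨hqp, hq⟩
            exact ⟨⟨hqp, hq.trans ((hmem_e p x).1 hpE)⟩, hq⟩
        have hrxy := hr y (p : L)
        rw [hinfe, hsupe] at hrxy
        have hsum : ∑ q ∈ e x, wv q = wv p + ∑ q ∈ (e x).erase p, wv q :=
          (Finset.add_sum_erase _ _ hpE).symm
        rw [hsum]
        have hwvp : wv p = (r (p : L) : ℤ) - (r (j ((e (p : L)).erase p)) : ℤ) := rfl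
        rw [hEy] at ihy
        have : (r y : ℤ) + (r (p : L) : ℤ) =
            (r (j ((e (p : L)).erase p)) : ℤ) + (r x : ℤ) := by exact_mod_cast hrxy
        omega
  have repx : ∀ x : L, (r x : ℤ) = (r (⊥ : L) : ℤ) + ∑ p ∈ e x, wv p :=
    fun x => rep (e x).card x rfl
  -- extensions of μ g h to Finset P
  set μt : Finset P → ℝ := fun A => ∑ x ∈ Finset.univ.filter (fun x : L => e x = A), μ x
    with hμt
  have hμt_e : ∀ x : L, μt (e x) = μ x := by
    intro x
    have hfilter : Finset.univ.filter (fun z : L => e z = e x) = {x} := by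
      ext z
      simp only [mem_filter, mem_univ, true_and, mem_singleton]
      exact ⟨fun hz => einj hz, fun hz => by rw [hz]⟩
    rw [hμt]
    simp only
    rw [hfilter, Finset.sum_singleton]
  have hμt_zero : ∀ A : Finset P, (∀ z : L, e z ≠ A) → μt A = 0 := by
    intro A hA
    rw [hμt]
    simp only
    rw [Finset.filter_eq_empty_iff.2 (fun {z} _ => hA z), Finset.sum_empty]
  have hμt0 : ∀ A, 0 ≤ μt A := fun A => Finset.sum_nonneg fun x _ => hμ0 x
  have hμtls : ∀ A B : Finset P, μt A * μt B ≤ μt (A ∩ B) * μt (A ∪ B) := by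
    intro A B
    by_cases hA : ∃ z : L, e z = A
    · by_cases hB : ∃ z : L, e z = B
      · obtain ⟨xa, rfl⟩ := hA
        obtain ⟨xb, rfl⟩ := hB
        rw [← e_inf, ← e_sup, hμt_e, hμt_e, hμt_e, hμt_e]
        exact hμ xa xb
      · push_neg at hB
        rw [hμt_zero B hB, mul_zero]
        exact mul_nonneg (hμt0 _) (hμt0 _)
    · push_neg at hA
      rw [hμt_zero A hA, zero_mul]
      exact mul_nonneg (hμt0 _) (hμt0 _)
  set gt' : Finset P → ℝ := fun A => g (j A) with hgt
  set ht' : Finset P → ℝ := fun A => h (j A) with hht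
  have hgt_e : ∀ x : L, gt' (e x) = g x := fun x => by rw [hgt]; simp only; rw [hj_e]
  have hht_e : ∀ x : L, ht' (e x) = h x := fun x => by rw [hht]; simp only; rw [hj_e]
  have hgt0 : ∀ A, 0 ≤ gt' A := fun A => hg0 _
  have hht0 : ∀ A, 0 ≤ ht' A := fun A => hh0 _
  have hgtm : ∀ A B : Finset P, A ⊆ B → gt' A ≤ gt' B :=
    fun A B hAB => hg (Finset.sup_mono hAB)
  have bhtm : ∀ A B : Finset P, A ⊆ B → ht' A ≤ ht' B :=
    fun A B hAB => hh (Finset.sup_mono hAB)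
  -- instantiate the main combinatorial lemma
  set d' : ℤ := (d : ℤ) - 2 * (r (⊥ : L) : ℤ) with hd'
  have QL := Qlem (Finset.univ : Finset P) ∅ (disjoint_bot_left) wv μt gt' ht'
    hμt0 hgt0 hht0 hμtls hgtm bhtm d'
  -- translate Qsum to the lattice double sums
  have trans : ∀ (F G : L → ℝ) (Ft Gt : Finset P → ℝ),
      (∀ x, Ft (e x) = F x) → (∀ x, Gt (e x) = G x) →
      (∀ A, (∀ z : L, e z ≠ A) → Ft A = 0) → (∀ A, (∀ z : L, e z ≠ A) → Gt A = 0) →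
      Qsum wv ∅ Finset.univ d' Ft Gt =
        ∑ x : L, ∑ y : L, (if r x + r y = d then F x * G y else 0) := by
    intro F G Ft Gt hFt hGt hFz hGz
    unfold Qsum
    rw [empty_union]
    have condsimp : ∀ A B : Finset P,
        ((∅ : Finset P) ⊆ A ∪ B ∧ A ∩ B ∩ ∅ = ∅ ∧
          (∑ x ∈ A ∩ Finset.univ, wv x) + (∑ x ∈ B ∩ Finset.univ, wv x) = d') ↔
        ((∑ x ∈ A, wv x) + (∑ x ∈ B, wv x) = d') := by
      intro A B
      simp [inter_univ]
    have step1 : (∑ A ∈ (Finset.univ : Finset P).powerset, ∑ B ∈ (Finset.univ : Finset P).powerset,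
        (if (∅ : Finset P) ⊆ A ∪ B ∧ A ∩ B ∩ ∅ = ∅ ∧
            (∑ x ∈ A ∩ Finset.univ, wv x) + (∑ x ∈ B ∩ Finset.univ, wv x) = d'
         then Ft A * Gt B else 0)) =
        ∑ A ∈ (Finset.univ : Finset P).powerset, ∑ B ∈ (Finset.univ : Finset P).powerset,
        (if (∑ x ∈ A, wv x) + (∑ x ∈ B, wv x) = d' then Ft A * Gt B else 0) := by
      apply Finset.sum_congr rfl; intro A _
      apply Finset.sum_congr rfl; intro B _
      exact if_congr (condsimp A B) rfl rfl
    rw [step1]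
    have himg : (Finset.univ : Finset L).image e ⊆ (Finset.univ : Finset P).powerset :=
      fun A _ => mem_powerset.2 (subset_univ _)
    have notimg : ∀ {A : Finset P}, A ∉ (Finset.univ : Finset L).image e →
        ∀ z : L, e z ≠ A := by
      intro A hA z hz
      exact hA (mem_image.2 ⟨z, mem_univ z, hz⟩)
    rw [← Finset.sum_subset himg (by
      intro A _ hA
      apply Finset.sum_eq_zero
      intro B _
      rw [hFz A (notimg hA), zero_mul, ite_self])]
    rw [Finset.sum_image (fun x _ y _ hxy => einj hxy)]
    apply Finset.sum_congr rfl
    intro x _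
    rw [← Finset.sum_subset himg (by
      intro B _ hB
      rw [hGz B (notimg hB), mul_zero, ite_self])]
    rw [Finset.sum_image (fun a _ b _ hab => einj hab)]
    apply Finset.sum_congr rfl
    intro y _
    have hcond : ((∑ q ∈ e x, wv q) + (∑ q ∈ e y, wv q) = d') ↔ (r x + r y = d) := by
      have hx := repx x
      have hy := repx y
      constructor
      · intro hc
        have : (r x : ℤ) + (r y : ℤ) = (d : ℤ) := by omega
        exact_mod_cast this
      · intro hc
        have : (r x : ℤ) + (r y : ℤ) = (d : ℤ) := by exact_mod_cast hc
        omega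
    rw [hFt, hGt]
    exact if_congr hcond rfl rfl
  rw [← trans (fun x => g x * μ x) (fun y => h y * μ y)
      (fun A => gt' A * μt A) (fun B => ht' B * μt B)
      (fun x => by simp only [hgt_e, hμt_e]) (fun x => by simp only [hht_e, hμt_e])
      (fun A hA => by simp only [hμt_zero A hA, mul_zero])
      (fun A hA => by simp only [hμt_zero A hA, mul_zero]),
    ← trans μ (fun y => g y * h y * μ y) μt (fun B => gt' B * ht' B * μt B)
      hμt_e (fun x => by simp only [hgt_e, hht_e, hμt_e])
      (fun A hA => hμt_zero A hA)
      (fun A hA => by simp only [hμt_zero A hA, mul_zero])]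
  exact QL
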